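/- For every positive integer n, (4^n / √(π n)) · exp(-1/(8n)) ≤ C(2n, n). -/

import Mathlib

open Real Filter Nat Stirling Topology

lemma alg_ineq (t : ℝ) (ht : 1 ≤ t) :
    let x := 1/(2*t+1)^2
    x/(5*(1-x)) - x/5 + x/3 ≤ 1/(12*t) - 1/(12*(t+1)) := by
  intro x
  have hx : x = 1/(2*t+1)^2 := rfl
  have hp : (0:ℝ) < (2*t+1)^2 := by positivity
  have h1x : (0:ℝ) < 1 - x := by
    rw [hx, sub_pos, div_lt_one hp]; nlinarith
  have key : x/(5*(1-x)) - x/5 + x/3 = x/3 + x^2/(5*(1-x)) := by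
    field_simp
    ring
  rw [key, hx]
  have h2 : 1 - 1/(2*t+1)^2 = (4*t^2+4*t)/(2*t+1)^2 := by field_simp; ring
  rw [h2]
  have ht0 : (0:ℝ) < t := by linarith
  have e1 : (1/(2*t+1)^2)^2 / (5*((4*t^2+4*t)/(2*t+1)^2)) = 1/(5*(4*t^2+4*t)*(2*t+1)^2) := by
    field_simp
  rw [e1]
  have e2 : 1/(12*t) - 1/(12*(t+1)) = 1/(12*t*(t+1)) := by field_simp; ring
  rw [e2]
  rw [div_add_div _ _ (by positivity) (by positivity), div_le_div_iff₀ (by positivity) (by positivity)]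
  have e3 : 1 / (2 * t + 1) ^ 2 * (5 * (4 * t ^ 2 + 4 * t) * (2 * t + 1) ^ 2)
      = 5 * (4 * t ^ 2 + 4 * t) := by field_simp
  rw [e3]
  nlinarith [ht0, sq_nonneg t]

lemma diff_le (m : ℕ) : Real.log (stirlingSeq (m+1)) - Real.log (stirlingSeq (m+2)) ≤
    1/(12*((m:ℝ)+1)) - 1/(12*((m:ℝ)+2)) := by
  set x : ℝ := ((1 : ℝ) / (2 * ↑(m + 1) + 1)) ^ 2 with hxdef
  have hm : (0:ℝ) ≤ (m:ℝ) := Nat.cast_nonneg m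
  have hxval : x = 1/(2*((m:ℝ)+1)+1)^2 := by rw [hxdef]; push_cast; rw [div_pow, one_pow]
  have hx0 : 0 ≤ x := sq_nonneg _
  have hx1 : x < 1 := by
    rw [hxval, div_lt_one (by positivity)]; nlinarith
  have hsum := Stirling.log_stirlingSeq_diff_hasSum m
  have hg : HasSum (fun k : ℕ => x^(k+1)/5) (x/5 * (1-x)⁻¹) := by
    have := (hasSum_geometric_of_lt_one hx0 hx1).mul_left (x/5)
    convert this using 2 with k
    · rfl
    ring
  have hg2 : HasSum (Function.update (fun k : ℕ => x^(k+1)/5) 0 (x/3))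
      (x/3 - x/5 + x/5 * (1-x)⁻¹) := by
    have := hg.update 0 (x/3)
    convert this using 1
    · rfl
    simp
  have hle : Real.log (stirlingSeq (m+1)) - Real.log (stirlingSeq (m+2)) ≤
      x/3 - x/5 + x/5 * (1-x)⁻¹ := by
    refine hasSum_le (fun k => ?_) hsum hg2
    cases k with
    | zero =>
      simp only [Function.update_self]
      apply le_of_eq
      push_cast
      ring_nf
      push_cast
      rw [hxdef]; push_cast
      ring
    | succ j =>
      rw [Function.update_of_ne (by simp)]
      have hxp : (0:ℝ) ≤ x ^ (j+1+1) := pow_nonneg hx0 _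
      calc (1:ℝ) / (2 * ↑(j + 1 + 1) + 1) * x ^ (j+1+1)
          ≤ 1/5 * x ^ (j+1+1) := by
            apply mul_le_mul_of_nonneg_right _ hxp
            apply div_le_div_of_nonneg_left one_pos.le (by norm_num)
            push_cast
            linarith [Nat.cast_nonneg (α := ℝ) j]
        _ = x^(j+1+1)/5 := by ring
  have h1x : (0:ℝ) < 1 - x := by linarith
  have := alg_ineq ((m:ℝ)+1) (by linarith)
  simp only at this
  rw [← hxval] at this
  calc Real.log (stirlingSeq (m+1)) - Real.log (stirlingSeq (m+2))
      ≤ x/3 - x/5 + x/5 * (1-x)⁻¹ := hle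
    _ = x/(5*(1-x)) - x/5 + x/3 := by field_simp; ring
    _ ≤ 1/(12*((m:ℝ)+1)) - 1/(12*((m:ℝ)+1+1)) := this
    _ = 1/(12*((m:ℝ)+1)) - 1/(12*((m:ℝ)+2)) := by ring_nf

lemma tele (n k : ℕ) : Real.log (stirlingSeq (n+1)) - Real.log (stirlingSeq (n+1+k)) ≤
    1/(12*((n:ℝ)+1)) - 1/(12*((n:ℝ)+1+k)) := by
  induction k with
  | zero => simp
  | succ j ih =>
    have h := diff_le (n + j)
    have e1 : n + j + 1 = n + 1 + j := by ring
    have e2 : n + j + 2 = n + 1 + (j+1) := by ring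
    rw [e1, e2] at h
    push_cast at h ih ⊢
    ring_nf at h ih ⊢
    linarith

lemma tail (n : ℕ) : Real.log (stirlingSeq (n+1)) ≤ Real.log (Real.sqrt π) + 1/(12*((n:ℝ)+1)) := by
  have hlim : Tendsto (fun k : ℕ => Real.log (stirlingSeq (n+1+k))) atTop (𝓝 (Real.log (Real.sqrt π))) := by
    have h1 : Tendsto (fun k : ℕ => n+1+k) atTop atTop := by
      exact tendsto_atTop_mono (fun k => Nat.le_add_left k (n+1)) tendsto_id
    exact ((Real.continuousAt_log (by positivity)).tendsto.comp (tendsto_stirlingSeq_sqrt_pi.comp h1))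
  have hb : ∀ k : ℕ, Real.log (stirlingSeq (n+1)) - 1/(12*((n:ℝ)+1)) ≤ Real.log (stirlingSeq (n+1+k)) := by
    intro k
    have := tele n k
    have hk : (0:ℝ) ≤ 1/(12*((n:ℝ)+1+k)) := by positivity
    linarith
  linarith [ge_of_tendsto' hlim hb]

theorem stmt3 (n : ℕ) (hn : 0 < n) :
    4 ^ n / Real.sqrt (Real.pi * n) * Real.exp (-1 / (8 * n)) ≤ ((2 * n).choose n : ℝ) := by
  obtain ⟨p, rfl⟩ : ∃ p, n = p + 1 := ⟨n - 1, by omega⟩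
  set n := p + 1 with hn1
  set a := stirlingSeq n with ha
  set b := stirlingSeq (2*n) with hb
  have ha0 : 0 < a := stirlingSeq'_pos p
  have hb0 : 0 < b := by
    rw [hb, show 2*n = (2*p+1)+1 by ring]
    exact stirlingSeq'_pos (2*p+1)
  have hnR : (0:ℝ) < (n:ℝ) := by positivity
  have hE : (0:ℝ) < Real.exp 1 := Real.exp_pos 1
  have h1 : Real.log a ≤ Real.log (Real.sqrt π) + 1/(12*(n:ℝ)) := by
    have := tail p; push_cast at this ⊢; convert this using 3 <;> push_cast [hn1] <;> ring
  have h2 : Real.log a - Real.log b ≤ 1/(12*(n:ℝ)) - 1/(12*(2*(n:ℝ))) := by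
    have := tele p (p+1)
    rw [show p + 1 + (p+1) = 2*n by ring] at this
    push_cast at this ⊢
    convert this using 3 <;> push_cast [hn1] <;> ring
  have hkey : 2 * Real.log a - Real.log b ≤ Real.log (Real.sqrt π) + 1/(8*(n:ℝ)) := by
    have : 1/(12*(n:ℝ)) + (1/(12*(n:ℝ)) - 1/(12*(2*(n:ℝ)))) = 1/(8*(n:ℝ)) := by
      field_simp; ring
    linarith
  have hab : a^2 ≤ Real.sqrt π * Real.exp (1/(8*(n:ℝ))) * b := by
    have e : a^2 = Real.exp (2 * Real.log a) := by
      rw [← Real.exp_log (pow_pos ha0 2), Real.log_pow]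
      norm_num
    rw [e, show Real.sqrt π * Real.exp (1/(8*(n:ℝ))) * b
        = Real.exp (Real.log (Real.sqrt π) + 1/(8*(n:ℝ)) + Real.log b) by
      rw [Real.exp_add, Real.exp_add, Real.exp_log (by positivity), Real.exp_log hb0]]
    exact Real.exp_le_exp.mpr (by linarith)
  -- factorial identities
  have hfn : (n ! : ℝ) = a * (Real.sqrt (2*(n:ℝ)) * ((n:ℝ)/Real.exp 1)^n) := by
    rw [ha, stirlingSeq, div_mul_cancel₀]
    exact ne_of_gt (mul_pos (Real.sqrt_pos.mpr (by linarith))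
      (pow_pos (div_pos hnR hE) _))
  have hf2n : ((2*n)! : ℝ) = b * (Real.sqrt (2*(2*(n:ℝ))) * ((2*(n:ℝ))/Real.exp 1)^(2*n)) := by
    rw [hb, stirlingSeq]
    push_cast
    rw [div_mul_cancel₀]
    exact ne_of_gt (mul_pos (Real.sqrt_pos.mpr (by linarith))
      (pow_pos (_root_.div_pos (by linarith) hE) _))
  have hnat : (2*n).choose n * (n ! * n !) = (2*n)! := by
    rw [← Nat.choose_mul_factorial_mul_factorial (show n ≤ 2*n by omega),
      show 2*n-n = n by omega]
    ring
  have hC : (((2*n).choose n : ℕ) : ℝ) = ((2*n)! : ℝ) / (((n !):ℝ)^2) := by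
    rw [eq_div_iff (by positivity), sq]
    exact_mod_cast hnat
  have s4 : Real.sqrt (2*(2*(n:ℝ))) = 2 * Real.sqrt n := by
    rw [show (2*(2*(n:ℝ))) = 4*n by ring, Real.sqrt_mul (by norm_num),
      show (4:ℝ) = 2^2 by norm_num, Real.sqrt_sq (by norm_num)]
  have s2 : (Real.sqrt (2*(n:ℝ)))^2 = 2*(n:ℝ) := Real.sq_sqrt (by positivity)
  have pw : ((2*(n:ℝ))/Real.exp 1)^(2*n) = 4^n * (((n:ℝ)/Real.exp 1)^n)^2 := by
    rw [show 2*(n:ℝ)/Real.exp 1 = 2 * ((n:ℝ)/Real.exp 1) by ring, mul_pow,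
      show (2:ℝ)^(2*n) = 4^n by rw [pow_mul]; norm_num,
      show ((n:ℝ)/Real.exp 1)^(2*n) = (((n:ℝ)/Real.exp 1)^n)^2 by
        rw [show 2*n = n*2 by ring, pow_mul]]
  have hfnsq : ((n !:ℝ))^2 = a^2 * (2*(n:ℝ)) * (((n:ℝ)/Real.exp 1)^n)^2 := by
    rw [hfn, mul_pow, mul_pow, s2]; ring
  have hsn : (0:ℝ) < Real.sqrt (n:ℝ) := Real.sqrt_pos.mpr hnR
  have hnsq : Real.sqrt (n:ℝ) * Real.sqrt (n:ℝ) = (n:ℝ) := Real.mul_self_sqrt hnR.le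
  have hQ : (0:ℝ) < ((n:ℝ)/Real.exp 1)^n := pow_pos (div_pos hnR hE) _
  have hCeq : (((2*n).choose n : ℕ) : ℝ) = 4^n * b / (a^2 * Real.sqrt n) := by
    rw [hC, hf2n, s4, pw, hfnsq, div_eq_div_iff (by positivity) (by positivity)]
    linear_combination (2 * b * (4:ℝ)^n * (((n:ℝ)/Real.exp 1)^n)^2 * a^2) * hnsq
  -- final inequality
  rw [hCeq, Real.sqrt_mul Real.pi_pos.le]
  rw [div_mul_eq_mul_div, div_le_div_iff₀ (by positivity) (by positivity)]
  have hexp : Real.exp (-1/(8*(n:ℝ))) * Real.exp (1/(8*(n:ℝ))) = 1 := by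
    rw [← Real.exp_add, show -1/(8*(n:ℝ)) + 1/(8*(n:ℝ)) = 0 by ring, Real.exp_zero]
  have key2 : Real.exp (-1/(8*(n:ℝ))) * a^2 ≤ b * Real.sqrt π := by
    have := mul_le_mul_of_nonneg_left hab (Real.exp_nonneg (-1/(8*(n:ℝ))))
    calc Real.exp (-1/(8*(n:ℝ))) * a^2
        ≤ Real.exp (-1/(8*(n:ℝ))) * (Real.sqrt π * Real.exp (1/(8*(n:ℝ))) * b) := this
      _ = (Real.exp (-1/(8*(n:ℝ))) * Real.exp (1/(8*(n:ℝ)))) * (Real.sqrt π * b) := by ring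
      _ = b * Real.sqrt π := by rw [hexp]; ring
  calc (4:ℝ)^n * Real.exp (-1/(8*(n:ℝ))) * (a^2 * Real.sqrt n)
      = (Real.exp (-1/(8*(n:ℝ))) * a^2) * ((4:ℝ)^n * Real.sqrt n) := by ring
    _ ≤ (b * Real.sqrt π) * ((4:ℝ)^n * Real.sqrt n) := by
        apply mul_le_mul_of_nonneg_right key2 (by positivity)
    _ = 4^n * b * (Real.sqrt π * Real.sqrt n) := by ring
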